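/- Let G be a countable group. If G admits no minimal proximal action on the real line, then G belongs to the class C. -/

import Mathlib

open Topology Filter

/-!  `ℝ ≃o ℝ` is the group `Homeo₀(ℝ)` of orientation-preserving homeomorphisms of the
line (order isomorphisms of `ℝ`).  An action of a group `G` on the line is a group
homomorphism `G →* (ℝ ≃o ℝ)`. -/

/-- The underlying map of an action, as a point of the function space `G → ℝ → ℝ`
(equipped with the product topology of pointwise convergence and its Borel σ-algebra). -/
def actMap {G : Type*} [Group G] (φ : G →* (ℝ ≃o ℝ)) : G → ℝ → ℝ := fun g => ⇑(φ g)

/-- An action is minimal if every orbit is dense. -/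
def IsMinimalAction {G : Type*} [Group G] (φ : G →* (ℝ ≃o ℝ)) : Prop :=
  ∀ x : ℝ, Dense {y : ℝ | ∃ g : G, φ g x = y}

/-- Conjugation of (the underlying map of) an action by `f ∈ Homeo₀(ℝ)`. -/
def conjFun {G : Type*} (f : ℝ ≃o ℝ) (F : G → ℝ → ℝ) : G → ℝ → ℝ :=
  fun g x => f (F g (f.symm x))

/-- The space of minimal actions of `G` on the line, as a subset of the function
space `G → ℝ → ℝ`. -/
def RepMin (G : Type*) [Group G] : Set (G → ℝ → ℝ) :=
  {F | ∃ φ : G →* (ℝ ≃o ℝ), IsMinimalAction φ ∧ F = actMap φ}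

/-- `G` belongs to the class `𝒞`: the conjugacy relation on `RepMin G` is smooth, i.e.
there is a Borel map to `ℝ` whose fibers are exactly the conjugacy classes. -/
def ClassC (G : Type*) [Group G] : Prop :=
  ∃ r : (RepMin G) → ℝ, Measurable r ∧
    ∀ φ ψ : RepMin G, (r φ = r ψ ↔ ∃ f : ℝ ≃o ℝ, conjFun f (φ : G → ℝ → ℝ) = (ψ : G → ℝ → ℝ))

/-- A proximal action. -/
def IsProximalAction {G : Type*} [Group G] (φ : G →* (ℝ ≃o ℝ)) : Prop :=
  ∀ x y : ℝ, ∃ z : ℝ, ∃ u : ℕ → G,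
    Tendsto (fun n => φ (u n) x) atTop (𝓝 z) ∧ Tendsto (fun n => φ (u n) y) atTop (𝓝 z)


namespace Stmt3Aux

open Set

variable {G : Type*} [Group G]

lemma act_mul (φ : G →* (ℝ ≃o ℝ)) (a b : G) (x : ℝ) :
    actMap φ (a * b) x = actMap φ a (actMap φ b x) := by
  simp only [actMap, map_mul]; rfl

lemma act_one (φ : G →* (ℝ ≃o ℝ)) (x : ℝ) : actMap φ 1 x = x := by
  simp only [actMap, map_one]; rfl

lemma act_inv (φ : G →* (ℝ ≃o ℝ)) (a : G) (x : ℝ) :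
    actMap φ a⁻¹ (actMap φ a x) = x := by rw [← act_mul, inv_mul_cancel, act_one]

lemma act_inv' (φ : G →* (ℝ ≃o ℝ)) (a : G) (x : ℝ) :
    actMap φ a (actMap φ a⁻¹ x) = x := by rw [← act_mul, mul_inv_cancel, act_one]

lemma act_continuous (φ : G →* (ℝ ≃o ℝ)) (g : G) : Continuous (actMap φ g) :=
  (φ g).continuous

lemma act_mono (φ : G →* (ℝ ≃o ℝ)) (g : G) : StrictMono (actMap φ g) :=
  (φ g).strictMono

lemma act_le_iff (φ : G →* (ℝ ≃o ℝ)) (g : G) {x y : ℝ} :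
    actMap φ g x ≤ actMap φ g y ↔ x ≤ y := (φ g).le_iff_le

lemma act_le_diff (φ : G →* (ℝ ≃o ℝ)) (g h : G) (y : ℝ) :
    actMap φ g y ≤ actMap φ h y ↔ actMap φ (h⁻¹ * g) y ≤ y := by
  constructor
  · intro hle
    have := (act_mono φ h⁻¹).monotone hle
    rwa [act_inv, ← act_mul] at this
  · intro hle
    have := (act_mono φ h).monotone hle
    rwa [← act_mul, mul_inv_cancel_left] at this

lemma dense_orbit {φ : G →* (ℝ ≃o ℝ)} (hmin : IsMinimalAction φ) (x : ℝ) :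
    Dense {y : ℝ | ∃ g : G, actMap φ g x = y} := hmin x

/-- A nonempty closed invariant set is everything. -/
lemma closed_inv_univ {φ : G →* (ℝ ≃o ℝ)} (hmin : IsMinimalAction φ)
    {S : Set ℝ} (hS : IsClosed S) (hinv : ∀ g x, x ∈ S → actMap φ g x ∈ S)
    (hne : S.Nonempty) : S = univ := by
  obtain ⟨x₀, hx₀⟩ := hne
  have horb : {y : ℝ | ∃ g : G, actMap φ g x₀ = y} ⊆ S := by
    rintro y ⟨g, rfl⟩; exact hinv g x₀ hx₀
  have := (dense_orbit hmin x₀).mono horb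
  exact hS.closure_eq ▸ this.closure_eq

lemma image_eq_of_inv {φ : G →* (ℝ ≃o ℝ)} {S : Set ℝ}
    (hinv : ∀ g x, x ∈ S → actMap φ g x ∈ S) (g : G) : actMap φ g '' S = S := by
  apply subset_antisymm
  · rintro y ⟨x, hx, rfl⟩; exact hinv g x hx
  · intro x hx
    exact ⟨actMap φ g⁻¹ x, hinv g⁻¹ x hx, act_inv' φ g x⟩

/-- A nonempty open invariant set is everything. -/
lemma open_inv_univ {φ : G →* (ℝ ≃o ℝ)} (hmin : IsMinimalAction φ)
    {U : Set ℝ} (hU : IsOpen U) (hinv : ∀ g x, x ∈ U → actMap φ g x ∈ U)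
    (hne : U.Nonempty) : U = univ := by
  have hfr : ∀ g x, x ∈ frontier U → actMap φ g x ∈ frontier U := by
    intro g x hx
    have h1 : (φ g).toHomeomorph '' frontier U = frontier ((φ g).toHomeomorph '' U) :=
      Homeomorph.image_frontier _ _
    have h2 : (φ g).toHomeomorph '' U = U := image_eq_of_inv hinv g
    rw [h2] at h1
    have : actMap φ g x ∈ (φ g).toHomeomorph '' frontier U := ⟨x, hx, rfl⟩
    rwa [h1] at this
  by_cases hfe : (frontier U).Nonempty
  · have := closed_inv_univ hmin isClosed_frontier hfr hfe
    obtain ⟨x, hx⟩ := hne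
    have hxf : x ∈ frontier U := this ▸ mem_univ x
    have : x ∈ interior U := by rwa [hU.interior_eq]
    exact absurd this hxf.2
  · have : IsClopen U := isClopen_iff_frontier_eq_empty.mpr (not_nonempty_iff_eq_empty.mp hfe)
    exact this.eq_univ hne

/-- An equivariant monotone map with dense range between minimal actions is an order iso. -/
lemma exists_orderIso_of_equivariant {φ φ' : G →* (ℝ ≃o ℝ)} (hmin : IsMinimalAction φ)
    {m : ℝ → ℝ} (hmono : Monotone m) (hdr : DenseRange m)
    (hequi : ∀ g x, m (actMap φ g x) = actMap φ' g (m x)) :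
    ∃ f : ℝ ≃o ℝ, ∀ x, f x = m x := by
  have hsm : StrictMono m := by
    by_contra hsm
    obtain ⟨x₁, x₂, hlt, hle⟩ : ∃ x₁ x₂ : ℝ, x₁ < x₂ ∧ m x₂ ≤ m x₁ := by
      unfold StrictMono at hsm; push_neg at hsm
      obtain ⟨a, b, hab, h⟩ := hsm; exact ⟨a, b, hab, h⟩
    have hconst : ∀ y ∈ Set.Icc x₁ x₂, m y = m x₁ := fun y hy =>
      le_antisymm (le_trans (hmono hy.2) hle) (hmono hy.1)
    set U : Set ℝ := ⋃ g : G, actMap φ g '' Set.Ioo x₁ x₂ with hUdef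
    have hUopen : IsOpen U := isOpen_iUnion fun g =>
      ((φ g).toHomeomorph.isOpenMap _ isOpen_Ioo)
    have hUinv : ∀ g x, x ∈ U → actMap φ g x ∈ U := by
      rintro g x hx
      obtain ⟨a, ⟨t, ht, rfl⟩⟩ := Set.mem_iUnion.mp hx
      exact Set.mem_iUnion.mpr ⟨g * a, ⟨t, ht, act_mul φ g a t⟩⟩
    have hUne : U.Nonempty :=
      ⟨actMap φ 1 ((x₁ + x₂) / 2), Set.mem_iUnion.mpr
        ⟨1, ⟨(x₁ + x₂)/2, ⟨by linarith, by linarith⟩, rfl⟩⟩⟩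
    have hUuniv := open_inv_univ hmin hUopen hUinv hUne
    have hloc : ∀ x : ℝ, ∃ V : Set ℝ, IsOpen V ∧ x ∈ V ∧ ∀ y ∈ V, m y = m x := by
      intro x
      have : x ∈ U := hUuniv ▸ Set.mem_univ x
      obtain ⟨a, ⟨t, ht, hxt⟩⟩ := Set.mem_iUnion.mp this
      have hval : ∀ y ∈ actMap φ a '' Set.Ioo x₁ x₂, m y = actMap φ' a (m x₁) := by
        rintro y ⟨s, hs, rfl⟩
        rw [hequi, hconst s ⟨hs.1.le, hs.2.le⟩]
      refine ⟨actMap φ a '' Set.Ioo x₁ x₂, (φ a).toHomeomorph.isOpenMap _ isOpen_Ioo,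
        ⟨t, ht, hxt⟩, fun y hy => ?_⟩
      rw [hval y hy, ← hval x ⟨t, ht, hxt⟩]
    have hclopen : IsClopen {x : ℝ | m x = m 0} := by
      constructor
      · rw [← isOpen_compl_iff, isOpen_iff_mem_nhds]
        intro x hx
        obtain ⟨V, hVo, hxV, hV⟩ := hloc x
        exact Filter.mem_of_superset (hVo.mem_nhds hxV) fun y hy hy' =>
          hx (by simp only [Set.mem_setOf_eq] at hy' ⊢; rw [← hV y hy, hy'])
      · rw [isOpen_iff_mem_nhds]
        intro x hx
        obtain ⟨V, hVo, hxV, hV⟩ := hloc x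
        exact Filter.mem_of_superset (hVo.mem_nhds hxV) fun y hy => by
          simp only [Set.mem_setOf_eq] at hx ⊢; rw [hV y hy, hx]
    have huniv := hclopen.eq_univ ⟨0, rfl⟩
    have hrange : Set.range m ⊆ {m 0} := by
      rintro w ⟨x, rfl⟩
      have : x ∈ {x : ℝ | m x = m 0} := huniv ▸ Set.mem_univ x
      exact this
    have hd : Dense ({m 0} : Set ℝ) := hdr.mono hrange
    have : m 0 + 1 ∈ closure ({m 0} : Set ℝ) := hd _
    rw [closure_singleton] at this
    simp only [Set.mem_singleton_iff] at this
    linarith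
  have hsurj : Function.Surjective m := by
    intro c
    have hAne : {x : ℝ | m x ≤ c}.Nonempty := by
      obtain ⟨u, hw⟩ := hdr.exists_mem_open isOpen_Ioo
        (Set.nonempty_Ioo.mpr (by linarith : c - 1 < c))
      exact ⟨u, hw.2.le⟩
    have hAbdd : BddAbove {x : ℝ | m x ≤ c} := by
      obtain ⟨v, hw⟩ := hdr.exists_mem_open isOpen_Ioo
        (Set.nonempty_Ioo.mpr (by linarith : c < c + 1))
      refine ⟨v, fun x hx => le_of_not_gt fun hvx => ?_⟩
      have := hmono hvx.le
      simp only [Set.mem_setOf_eq] at hx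
      linarith [hw.1]
    rcases lt_trichotomy (m (sSup {x : ℝ | m x ≤ c})) c with hlt | heq | hgt
    · obtain ⟨u, hu⟩ := hdr.exists_mem_open isOpen_Ioo (Set.nonempty_Ioo.mpr hlt)
      have huA : u ∈ {x : ℝ | m x ≤ c} := hu.2.le
      have := hmono (le_csSup hAbdd huA)
      linarith [hu.1]
    · exact ⟨_, heq⟩
    · obtain ⟨u, hu⟩ := hdr.exists_mem_open isOpen_Ioo (Set.nonempty_Ioo.mpr hgt)
      have hub : ∀ x ∈ {x : ℝ | m x ≤ c}, x ≤ u := fun x hx =>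
        le_of_not_gt fun hux => by
          have := hmono hux.le
          simp only [Set.mem_setOf_eq] at hx
          linarith [hu.1]
      have := hmono (csSup_le hAne hub)
      linarith [hu.2]
  exact ⟨StrictMono.orderIsoOfSurjective m hsm hsurj, fun x => rfl⟩

/-- From order matching at a converging sequence of base points, build a conjugacy. -/
lemma conj_of_matching {φ φ' : G →* (ℝ ≃o ℝ)} (hmin : IsMinimalAction φ)
    (hmin' : IsMinimalAction φ') (y₀ y' : ℝ) (t : ℕ → ℝ) (ht : Tendsto t atTop (𝓝 y'))
    (hmatch : ∀ g h : G, ∀ᶠ n in atTop,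
      (actMap φ g y₀ ≤ actMap φ h y₀ ↔ actMap φ' g (t n) ≤ actMap φ' h (t n))) :
    ∃ f : ℝ ≃o ℝ, conjFun f (actMap φ) = actMap φ' := by
  have halpha : ∀ g h : G, actMap φ g y₀ ≤ actMap φ h y₀ → actMap φ' g y' ≤ actMap φ' h y' := by
    intro g h hle
    have hev : ∀ᶠ n in atTop, actMap φ' g (t n) ≤ actMap φ' h (t n) :=
      (hmatch g h).mono fun n hn => hn.mp hle
    have h1 : Tendsto (fun n => actMap φ' g (t n)) atTop (𝓝 (actMap φ' g y')) :=
      ((act_continuous φ' g).tendsto y').comp ht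
    have h2 : Tendsto (fun n => actMap φ' h (t n)) atTop (𝓝 (actMap φ' h y')) :=
      ((act_continuous φ' h).tendsto y').comp ht
    exact le_of_tendsto_of_tendsto h1 h2 hev
  set S : ℝ → Set ℝ := fun x => (fun g => actMap φ' g y') '' {g : G | actMap φ g y₀ ≤ x} with hSdef
  have hSne : ∀ x, (S x).Nonempty := by
    intro x
    obtain ⟨w, ⟨g, hg⟩, hw⟩ := (dense_orbit hmin y₀).exists_mem_open isOpen_Ioo
      (Set.nonempty_Ioo.mpr (by linarith : x - 1 < x))
    exact ⟨actMap φ' g y', ⟨g, by rw [Set.mem_setOf_eq, hg]; exact hw.2.le, rfl⟩⟩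
  have hSbdd : ∀ x, BddAbove (S x) := by
    intro x
    obtain ⟨w, ⟨g₀, hg₀⟩, hw⟩ := (dense_orbit hmin y₀).exists_mem_open isOpen_Ioo
      (Set.nonempty_Ioo.mpr (by linarith : x < x + 1))
    refine ⟨actMap φ' g₀ y', ?_⟩
    rintro v ⟨g, hg, rfl⟩
    refine halpha g g₀ ?_
    rw [Set.mem_setOf_eq] at hg
    rw [hg₀]
    exact le_of_lt (lt_of_le_of_lt hg hw.1)
  set m : ℝ → ℝ := fun x => sSup (S x) with hmdef
  have hm_orbit : ∀ g : G, m (actMap φ g y₀) = actMap φ' g y' := by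
    intro g
    refine IsGreatest.csSup_eq ⟨⟨g, le_refl (actMap φ g y₀), rfl⟩, ?_⟩
    rintro v ⟨g', hg', rfl⟩
    exact halpha g' g hg'
  have hmono : Monotone m := by
    intro a b hab
    exact csSup_le_csSup (hSbdd b) (hSne a)
      (Set.image_mono fun g hg => le_trans hg hab)
  have hequi : ∀ a x, m (actMap φ a x) = actMap φ' a (m x) := by
    intro a x
    have hset : S (actMap φ a x) = actMap φ' a '' S x := by
      ext w
      constructor
      · rintro ⟨g, hg, rfl⟩
        refine ⟨actMap φ' (a⁻¹ * g) y', ⟨a⁻¹ * g, ?_, rfl⟩, ?_⟩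
        · rw [Set.mem_setOf_eq] at hg ⊢
          have := (act_mono φ a⁻¹).monotone hg
          rw [act_inv] at this
          rw [act_mul]
          exact this
        · rw [← act_mul, mul_inv_cancel_left]
      · rintro ⟨v, ⟨g, hg, rfl⟩, rfl⟩
        refine ⟨a * g, ?_, act_mul φ' a g y'⟩
        rw [Set.mem_setOf_eq] at hg ⊢
        rw [act_mul]
        exact (act_mono φ a).monotone hg
    rw [hmdef]
    simp only
    rw [hset]
    exact ((φ' a).map_csSup' (hSne x) (hSbdd x)).symm
  have hdr : DenseRange m := by
    have hsub : {w : ℝ | ∃ g : G, actMap φ' g y' = w} ⊆ Set.range m := by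
      rintro w ⟨g, rfl⟩
      exact ⟨actMap φ g y₀, hm_orbit g⟩
    exact (dense_orbit hmin' y').mono hsub
  obtain ⟨f, hf⟩ := exists_orderIso_of_equivariant hmin hmono hdr hequi
  refine ⟨f, ?_⟩
  funext g x
  have h1 : conjFun f (actMap φ) g x = m (actMap φ g (f.symm x)) := by
    rw [conjFun, hf]
  rw [h1, hequi, ← hf, f.apply_symm_apply]

/-- Contractibility of a pair of points. -/
def Contr (φ : G →* (ℝ ≃o ℝ)) (x y : ℝ) : Prop :=
  ∃ z : ℝ, ∃ u : ℕ → G, Tendsto (fun n => actMap φ (u n) x) atTop (𝓝 z) ∧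
    Tendsto (fun n => actMap φ (u n) y) atTop (𝓝 z)

lemma prox_iff_contr (φ : G →* (ℝ ≃o ℝ)) : IsProximalAction φ ↔ ∀ x y, Contr φ x y := Iff.rfl

lemma contr_refl (φ : G →* (ℝ ≃o ℝ)) (x : ℝ) : Contr φ x x :=
  ⟨x, fun _ => 1, by simp [act_one, tendsto_const_nhds], by simp [act_one, tendsto_const_nhds]⟩

lemma contr_symm {φ : G →* (ℝ ≃o ℝ)} {x y : ℝ} (h : Contr φ x y) : Contr φ y x := by
  obtain ⟨z, u, h1, h2⟩ := h; exact ⟨z, u, h2, h1⟩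

lemma contr_squeeze {φ : G →* (ℝ ≃o ℝ)} {x y a b : ℝ} (h : Contr φ x y)
    (hxa : x ≤ a) (hab : a ≤ b) (hby : b ≤ y) : Contr φ a b := by
  obtain ⟨z, u, h1, h2⟩ := h
  have ha : Tendsto (fun n => actMap φ (u n) a) atTop (𝓝 z) :=
    tendsto_of_tendsto_of_tendsto_of_le_of_le h1 h2
      (fun n => (act_mono φ (u n)).monotone hxa)
      (fun n => (act_mono φ (u n)).monotone (le_trans hab hby))
  have hb : Tendsto (fun n => actMap φ (u n) b) atTop (𝓝 z) :=
    tendsto_of_tendsto_of_tendsto_of_le_of_le h1 h2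
      (fun n => (act_mono φ (u n)).monotone (le_trans hxa hab))
      (fun n => (act_mono φ (u n)).monotone hby)
  exact ⟨z, u, ha, hb⟩

lemma contr_equiv {φ : G →* (ℝ ≃o ℝ)} {x y : ℝ} (a : G) (h : Contr φ x y) :
    Contr φ (actMap φ a x) (actMap φ a y) := by
  obtain ⟨z, u, h1, h2⟩ := h
  refine ⟨z, fun n => u n * a⁻¹, ?_, ?_⟩
  · have : ∀ n, actMap φ (u n * a⁻¹) (actMap φ a x) = actMap φ (u n) x := by
      intro n; rw [← act_mul, inv_mul_cancel_right]
    simpa only [this] using h1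
  · have : ∀ n, actMap φ (u n * a⁻¹) (actMap φ a y) = actMap φ (u n) y := by
      intro n; rw [← act_mul, inv_mul_cancel_right]
    simpa only [this] using h2

lemma act_iterate (φ : G →* (ℝ ≃o ℝ)) (b : G) (n : ℕ) (x : ℝ) :
    actMap φ (b ^ n) x = (actMap φ b)^[n] x := by
  induction n generalizing x with
  | zero => simp [act_one]
  | succ n ih =>
    rw [pow_succ', act_mul, ih, Function.iterate_succ_apply']

lemma tendsto_iterate_up {e : ℝ → ℝ} (hcont : Continuous e) (hmono : StrictMono e)
    {l w : ℝ} (hfix : e l = l) (hup : ∀ z, w ≤ z → z < l → z < e z) :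
    ∀ z, w ≤ z → z < l → Tendsto (fun n => e^[n] z) atTop (𝓝 l) := by
  intro z hwz hzl
  have hmem : ∀ n, w ≤ e^[n] z ∧ e^[n] z < l := by
    intro n
    induction n with
    | zero => exact ⟨hwz, hzl⟩
    | succ n ih =>
      rw [Function.iterate_succ_apply']
      refine ⟨le_trans ih.1 (hup _ ih.1 ih.2).le, ?_⟩
      have := hmono ih.2
      rwa [hfix] at this
  have hmonoseq : Monotone (fun n => e^[n] z) := by
    apply monotone_nat_of_le_succ
    intro n
    rw [Function.iterate_succ_apply']
    exact (hup _ (hmem n).1 (hmem n).2).le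
  have hbdd : BddAbove (Set.range fun n => e^[n] z) := by
    refine ⟨l, ?_⟩
    rintro v ⟨n, rfl⟩
    exact (hmem n).2.le
  have hconv := tendsto_atTop_ciSup hmonoseq hbdd
  set L := ⨆ n, e^[n] z with hL
  have heL : e L = L := by
    have h1 : Tendsto (fun n => e (e^[n] z)) atTop (𝓝 (e L)) :=
      (hcont.tendsto L).comp hconv
    have h2 : Tendsto (fun n => e (e^[n] z)) atTop (𝓝 L) := by
      have : (fun n => e (e^[n] z)) = fun n => e^[n + 1] z := by
        funext n; rw [Function.iterate_succ_apply']
      rw [this]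
      exact hconv.comp (tendsto_add_atTop_nat 1)
    exact tendsto_nhds_unique h1 h2
  have hwL : w ≤ L := le_trans hwz (le_ciSup hbdd 0)
  have hLl : L ≤ l := ciSup_le fun n => (hmem n).2.le
  rcases eq_or_lt_of_le hLl with h | h
  · rwa [h] at hconv
  · exact absurd heL (ne_of_gt (hup L hwL h))

lemma tendsto_iterate_down {e : ℝ → ℝ} (hcont : Continuous e) (hmono : StrictMono e)
    {l w : ℝ} (hfix : e l = l) (hdn : ∀ z, l < z → z ≤ w → e z < z) :
    ∀ z, l < z → z ≤ w → Tendsto (fun n => e^[n] z) atTop (𝓝 l) := by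
  intro z hlz hzw
  have hmem : ∀ n, l < e^[n] z ∧ e^[n] z ≤ w := by
    intro n
    induction n with
    | zero => exact ⟨hlz, hzw⟩
    | succ n ih =>
      rw [Function.iterate_succ_apply']
      constructor
      · have := hmono ih.1
        rwa [hfix] at this
      · exact le_trans (hdn _ ih.1 ih.2).le ih.2
  have hmonoseq : Antitone (fun n => e^[n] z) := by
    apply antitone_nat_of_succ_le
    intro n
    rw [Function.iterate_succ_apply']
    exact (hdn _ (hmem n).1 (hmem n).2).le
  have hbdd : BddBelow (Set.range fun n => e^[n] z) := by
    refine ⟨l, ?_⟩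
    rintro v ⟨n, rfl⟩
    exact (hmem n).1.le
  have hconv := tendsto_atTop_ciInf hmonoseq hbdd
  set L := ⨅ n, e^[n] z with hL
  have heL : e L = L := by
    have h1 : Tendsto (fun n => e (e^[n] z)) atTop (𝓝 (e L)) :=
      (hcont.tendsto L).comp hconv
    have h2 : Tendsto (fun n => e (e^[n] z)) atTop (𝓝 L) := by
      have : (fun n => e (e^[n] z)) = fun n => e^[n + 1] z := by
        funext n; rw [Function.iterate_succ_apply']
      rw [this]
      exact hconv.comp (tendsto_add_atTop_nat 1)
    exact tendsto_nhds_unique h1 h2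
  have hwL : L ≤ w := le_trans (ciInf_le hbdd 0) hzw
  have hLl : l ≤ L := le_ciInf fun n => (hmem n).1.le
  rcases eq_or_lt_of_le hLl with h | h
  · rwa [← h] at hconv
  · exact absurd heL (ne_of_lt (hdn L h hwL))

/-- From an element with points on both sides of the diagonal, get a contractible pair. -/
lemma exists_contr_pair {φ : G →* (ℝ ≃o ℝ)} {b : G}
    (h1 : ∃ z : ℝ, actMap φ b z ≤ z) (h2 : ∃ z : ℝ, z < actMap φ b z) :
    ∃ x y : ℝ, x < y ∧ Contr φ x y := by
  obtain ⟨c, hc⟩ := h1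
  obtain ⟨w, hw⟩ := h2
  set ψ := actMap φ b with hψ
  have hψc : Continuous ψ := act_continuous φ b
  have hψm : StrictMono ψ := act_mono φ b
  rcases lt_or_gt_of_ne (show c ≠ w by rintro rfl; exact absurd hc (not_le.mpr hw)) with hcw | hwc
  · -- c < w : fixed point below w, use backward iterates
    set A := {z : ℝ | ψ z ≤ z ∧ z ≤ w} with hA
    have hAne : A.Nonempty := ⟨c, hc, hcw.le⟩
    have hAbdd : BddAbove A := ⟨w, fun z hz => hz.2⟩
    have hAclosed : IsClosed A :=
      (isClosed_le hψc continuous_id).inter (isClosed_le continuous_id continuous_const)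
    set s := sSup A with hs
    have hsA : s ∈ A := hAclosed.csSup_mem hAne hAbdd
    have hsw : s < w := lt_of_le_of_ne hsA.2
      (fun heq => absurd (heq ▸ hsA.1) (not_le.mpr hw))
    have habove : ∀ z, s < z → z ≤ w → z < ψ z := by
      intro z hsz hzw
      by_contra hzb
      push_neg at hzb
      exact absurd (le_csSup hAbdd ⟨hzb, hzw⟩) (not_le.mpr hsz)
    have hfixs : ψ s = s := by
      refine le_antisymm hsA.1 ?_
      have hsub : Set.Ioc s w ⊆ {z : ℝ | z ≤ ψ z} :=
        fun z hz => (habove z hz.1 hz.2).le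
      have hcl : s ∈ closure (Set.Ioc s w) := by
        rw [closure_Ioc hsw.ne]
        exact ⟨le_refl s, hsw.le⟩
      have hclosed : IsClosed {z : ℝ | z ≤ ψ z} := isClosed_le continuous_id hψc
      have := closure_mono hsub hcl
      rwa [hclosed.closure_eq] at this
    -- backward map
    set e := actMap φ b⁻¹ with he
    have hes : e s = s := by
      have : e (ψ s) = s := act_inv φ b s
      rwa [hfixs] at this
    have hdn : ∀ z, s < z → z ≤ w → e z < z := by
      intro z hsz hzw
      by_contra hze
      push_neg at hze
      have := hψm.monotone hze
      have h3 : ψ (e z) = z := act_inv' φ b z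
      rw [h3] at this
      exact absurd (habove z hsz hzw) (not_lt.mpr this)
    have hconv := tendsto_iterate_down (act_continuous φ b⁻¹) (act_mono φ b⁻¹) hes hdn
    refine ⟨(s + w) / 2, w, by linarith [hsw], ?_⟩
    refine ⟨s, fun n => b⁻¹ ^ n, ?_, ?_⟩
    · have : ∀ n, actMap φ (b⁻¹ ^ n) ((s + w)/2) = e^[n] ((s + w)/2) := fun n => act_iterate φ b⁻¹ n _
      simp only [this]
      exact hconv _ (by linarith) (by linarith)
    · have : ∀ n, actMap φ (b⁻¹ ^ n) w = e^[n] w := fun n => act_iterate φ b⁻¹ n _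
      simp only [this]
      exact hconv _ hsw (le_refl w)
  · -- w < c : fixed point above w, use forward iterates
    set A := {z : ℝ | ψ z ≤ z ∧ w ≤ z} with hA
    have hAne : A.Nonempty := ⟨c, hc, hwc.le⟩
    have hAbdd : BddBelow A := ⟨w, fun z hz => hz.2⟩
    have hAclosed : IsClosed A :=
      (isClosed_le hψc continuous_id).inter (isClosed_le continuous_const continuous_id)
    set s := sInf A with hs
    have hsA : s ∈ A := hAclosed.csInf_mem hAne hAbdd
    have hws : w < s := lt_of_le_of_ne hsA.2
      (fun heq => absurd (heq ▸ hsA.1) (not_le.mpr hw))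
    have hbelow : ∀ z, w ≤ z → z < s → z < ψ z := by
      intro z hwz hzs
      by_contra hzb
      push_neg at hzb
      exact absurd (csInf_le hAbdd ⟨hzb, hwz⟩) (not_le.mpr hzs)
    have hfixs : ψ s = s := by
      refine le_antisymm hsA.1 ?_
      have hsub : Set.Ico w s ⊆ {z : ℝ | z ≤ ψ z} := fun z hz => (hbelow z hz.1 hz.2).le
      have hcl : s ∈ closure (Set.Ico w s) := by
        rw [closure_Ico hws.ne]
        exact ⟨hws.le, le_refl s⟩
      have hclosed : IsClosed {z : ℝ | z ≤ ψ z} := isClosed_le continuous_id hψc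
      have := closure_mono hsub hcl
      rwa [hclosed.closure_eq] at this
    have hconv := tendsto_iterate_up hψc hψm hfixs hbelow
    refine ⟨w, (w + s) / 2, by linarith, ?_⟩
    refine ⟨s, fun n => b ^ n, ?_, ?_⟩
    · have hit : ∀ n, actMap φ (b ^ n) w = ψ^[n] w := fun n => act_iterate φ b n _
      simp only [hit]
      exact hconv w (le_refl w) hws
    · have hit : ∀ n, actMap φ (b ^ n) ((w + s)/2) = ψ^[n] ((w + s)/2) := fun n => act_iterate φ b n _
      simp only [hit]
      exact hconv _ (by linarith) (by linarith)

/-- A minimal nonproximal action with a crossing element admits a commuting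
fixed-point-free order isomorphism. -/
lemma exists_commuting_translation {φ : G →* (ℝ ≃o ℝ)} (hmin : IsMinimalAction φ)
    (hnp : ¬ IsProximalAction φ) {b : G}
    (h1 : ∃ z : ℝ, actMap φ b z ≤ z) (h2 : ∃ z : ℝ, z < actMap φ b z) :
    ∃ T : ℝ ≃o ℝ, (∀ g x, T (actMap φ g x) = actMap φ g (T x)) ∧ ∀ x, x < T x := by
  set C : ℝ → Set ℝ := fun x => {y : ℝ | Contr φ x y} with hC
  have hCx : ∀ x, x ∈ C x := fun x => contr_refl φ x
  have hCne : ∀ x, (C x).Nonempty := fun x => ⟨x, hCx x⟩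
  have hCbdd : ∀ x, BddAbove (C x) := by
    by_contra hun
    push_neg at hun
    obtain ⟨x₀, hx₀⟩ := hun
    apply hnp
    rw [prox_iff_contr]
    have hbig : ∀ M : ℝ, ∃ v ∈ C x₀, M < v := by
      intro M
      rcases not_bddAbove_iff.mp hx₀ M with ⟨v, hv, hMv⟩
      exact ⟨v, hv, hMv⟩
    have step1 : ∀ a c : ℝ, x₀ ≤ a → a ≤ c → Contr φ a c := by
      intro a c hx₀a hac
      obtain ⟨v, hv, hcv⟩ := hbig c
      exact contr_squeeze hv hx₀a hac hcv.le
    have step2 : ∀ x y : ℝ, x ≤ y → Contr φ x y := by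
      intro x y hxy
      obtain ⟨w, ⟨g, hg⟩, hw⟩ := (dense_orbit hmin x).exists_mem_open isOpen_Ioi
        (⟨x₀ + 1, by simp [lt_add_one]⟩ : (Set.Ioi x₀).Nonempty)
      have h1' : Contr φ (actMap φ g x) (actMap φ g y) := by
        refine step1 _ _ ?_ ((act_mono φ g).monotone hxy)
        rw [hg]; exact le_of_lt hw
      have := contr_equiv g⁻¹ h1'
      rwa [act_inv, act_inv] at this
    intro x y
    rcases le_total x y with h | h
    · exact step2 x y h
    · exact contr_symm (step2 y x h)
  set T : ℝ → ℝ := fun x => sSup (C x) with hT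
  have hTge : ∀ x, x ≤ T x := fun x => le_csSup (hCbdd x) (hCx x)
  have hTmono : Monotone T := by
    intro a c hac
    refine csSup_le (hCne a) fun y hy => ?_
    rcases le_total y c with h | h
    · exact le_trans h (hTge c)
    · exact le_csSup (hCbdd c) (contr_squeeze hy hac h (le_refl y))
  have hCequi : ∀ g x, C (actMap φ g x) = actMap φ g '' C x := by
    intro g x
    ext y
    constructor
    · intro hy
      refine ⟨actMap φ g⁻¹ y, ?_, act_inv' φ g y⟩
      have := contr_equiv g⁻¹ hy
      rwa [act_inv] at this
    · rintro ⟨v, hv, rfl⟩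
      exact contr_equiv g hv
  have hTequi : ∀ g x, T (actMap φ g x) = actMap φ g (T x) := by
    intro g x
    rw [hT]
    simp only
    rw [hCequi g x]
    exact ((φ g).map_csSup' (hCne x) (hCbdd x)).symm
  obtain ⟨x₁, y₁, hx₁y₁, hcontr⟩ := exists_contr_pair h1 h2
  have hTx₁ : x₁ < T x₁ := lt_of_lt_of_le hx₁y₁ (le_csSup (hCbdd x₁) hcontr)
  have hdrT : DenseRange T := by
    have hsub : {w : ℝ | ∃ g : G, actMap φ g (T x₁) = w} ⊆ Set.range T := by
      rintro w ⟨g, rfl⟩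
      exact ⟨actMap φ g x₁, hTequi g x₁⟩
    exact (dense_orbit hmin (T x₁)).mono hsub
  obtain ⟨f, hf⟩ := exists_orderIso_of_equivariant hmin hTmono hdrT hTequi
  have hfix : ∀ x : ℝ, T x ≠ x := by
    intro x hx
    have hSinv : ∀ g y, y ∈ {z : ℝ | T z = z} → actMap φ g y ∈ {z : ℝ | T z = z} := by
      intro g y hy
      simp only [Set.mem_setOf_eq] at hy ⊢
      rw [hTequi, hy]
    have hSclosed : IsClosed {z : ℝ | T z = z} := by
      have : {z : ℝ | T z = z} = {z : ℝ | f z = z} := by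
        ext z; simp only [Set.mem_setOf_eq, hf]
      rw [this]
      exact isClosed_eq f.continuous continuous_id
    have huniv := closed_inv_univ hmin hSclosed hSinv ⟨x, hx⟩
    have hmem : x₁ ∈ {z : ℝ | T z = z} := huniv ▸ Set.mem_univ x₁
    exact absurd hmem (ne_of_gt hTx₁)
  refine ⟨f, fun g x => by rw [hf, hf]; exact hTequi g x, fun x => ?_⟩
  rw [hf]
  exact lt_of_le_of_ne (hTge x) (Ne.symm (hfix x))

lemma oi_pow_apply (T : ℝ ≃o ℝ) (n : ℕ) (x : ℝ) : (T ^ n) x = (⇑T)^[n] x := by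
  induction n generalizing x with
  | zero => rfl
  | succ n ih =>
    rw [pow_succ', RelIso.mul_apply, ih, Function.iterate_succ_apply']

lemma iterate_le_pow {T : ℝ ≃o ℝ} (hT : ∀ x, x < T x) (k : ℕ) (y : ℝ) :
    y ≤ (⇑T)^[k] y := by
  induction k with
  | zero => exact le_refl y
  | succ k ih =>
    rw [Function.iterate_succ_apply']
    exact le_trans ih (hT _).le

lemma iterate_tendsto_top {T : ℝ ≃o ℝ} (hT : ∀ x, x < T x) (q : ℝ) (M : ℝ) :
    ∃ n : ℕ, M < (⇑T)^[n] q := by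
  by_contra h
  push_neg at h
  have hmono : Monotone fun n => (⇑T)^[n] q := monotone_nat_of_le_succ fun n => by
    rw [Function.iterate_succ_apply']; exact (hT _).le
  have hbdd : BddAbove (Set.range fun n => (⇑T)^[n] q) :=
    ⟨M, by rintro v ⟨n, rfl⟩; exact h n⟩
  have hconv := tendsto_atTop_ciSup hmono hbdd
  set L := ⨆ n, (⇑T)^[n] q with hLdef
  have hTL : T L = L := by
    have h1 : Tendsto (fun n => T ((⇑T)^[n] q)) atTop (𝓝 (T L)) :=
      (T.continuous.tendsto L).comp hconv
    have h2 : Tendsto (fun n => T ((⇑T)^[n] q)) atTop (𝓝 L) := by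
      have heq : (fun n => T ((⇑T)^[n] q)) = fun n => (⇑T)^[n + 1] q := by
        funext n; rw [Function.iterate_succ_apply']
      rw [heq]
      exact hconv.comp (tendsto_add_atTop_nat 1)
    exact tendsto_nhds_unique h1 h2
  exact absurd hTL (ne_of_gt (hT L))

lemma iterate_tendsto_bot {T : ℝ ≃o ℝ} (hT : ∀ x, x < T x) (q : ℝ) (M : ℝ) :
    ∃ n : ℕ, (⇑T.symm)^[n] q < M := by
  by_contra h
  push_neg at h
  have hTs : ∀ x, T.symm x < x := by
    intro x
    have := hT (T.symm x)
    rwa [T.apply_symm_apply] at this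
  have hmono : Antitone fun n => (⇑T.symm)^[n] q := antitone_nat_of_succ_le fun n => by
    rw [Function.iterate_succ_apply']; exact (hTs _).le
  have hbdd : BddBelow (Set.range fun n => (⇑T.symm)^[n] q) :=
    ⟨M, by rintro v ⟨n, rfl⟩; exact h n⟩
  have hconv := tendsto_atTop_ciInf hmono hbdd
  set L := ⨅ n, (⇑T.symm)^[n] q with hLdef
  have hTL : T.symm L = L := by
    have h1 : Tendsto (fun n => T.symm ((⇑T.symm)^[n] q)) atTop (𝓝 (T.symm L)) :=
      ((T.symm).continuous.tendsto L).comp hconv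
    have h2 : Tendsto (fun n => T.symm ((⇑T.symm)^[n] q)) atTop (𝓝 L) := by
      have heq : (fun n => T.symm ((⇑T.symm)^[n] q)) = fun n => (⇑T.symm)^[n + 1] q := by
        funext n; rw [Function.iterate_succ_apply']
      rw [heq]
      exact hconv.comp (tendsto_add_atTop_nat 1)
    exact tendsto_nhds_unique h1 h2
  exact absurd hTL (ne_of_lt (hTs L))

lemma symm_pow_apply (T : ℝ ≃o ℝ) (n : ℕ) (x : ℝ) :
    (T ^ (-(n : ℤ))) x = (⇑T.symm)^[n] x := by
  rw [zpow_neg, zpow_natCast, ← inv_pow]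
  exact oi_pow_apply T⁻¹ n x

/-- Fold any point into the fundamental domain `[c, T c)`. -/
lemma fold_exists {T : ℝ ≃o ℝ} (hT : ∀ x, x < T x) (c q : ℝ) :
    ∃ m : ℤ, c ≤ (T ^ m) q ∧ (T ^ m) q < T c := by
  classical
  have hmono_m : ∀ (m : ℤ) (k : ℕ), (T ^ m) q ≤ (T ^ (m + k)) q := by
    intro m k
    have : T ^ (m + (k : ℤ)) = T ^ (k : ℤ) * T ^ m := by
      rw [← zpow_add]; ring_nf
    rw [this, RelIso.mul_apply, zpow_natCast, oi_pow_apply]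
    exact iterate_le_pow hT k _
  obtain ⟨n₁, hn₁⟩ := iterate_tendsto_top hT q c
  obtain ⟨n₀, hn₀⟩ := iterate_tendsto_bot hT q c
  set P : ℤ → Prop := fun m => c ≤ (T ^ m) q with hP
  have hPinh : ∃ m, P m := by
    refine ⟨(n₁ : ℤ), ?_⟩
    rw [hP]
    simp only
    rw [zpow_natCast, oi_pow_apply]
    exact hn₁.le
  have hPbdd : ∃ b : ℤ, ∀ z : ℤ, P z → b ≤ z := by
    refine ⟨-(n₀ : ℤ), fun z hz => ?_⟩
    by_contra hlt
    push_neg at hlt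
    have hk : (-(n₀ : ℤ)) = z + ((-(n₀ : ℤ)) - z).toNat := by
      rw [Int.toNat_of_nonneg (by omega)]; ring
    have h1 : (T ^ z) q ≤ (T ^ (-(n₀ : ℤ))) q := by
      rw [hk]; exact hmono_m z _
    rw [symm_pow_apply] at h1
    exact absurd (le_trans hz h1) (not_le.mpr hn₀)
  obtain ⟨m₀, hm₀, hleast⟩ := Int.exists_least_of_bdd hPbdd hPinh
  refine ⟨m₀, hm₀, ?_⟩
  have hnotP : ¬ P (m₀ - 1) := fun hmem => absurd (hleast _ hmem) (by omega)
  have hlt : (T ^ (m₀ - 1)) q < c := not_le.mp hnotP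
  have hdec : (T ^ m₀) q = T ((T ^ (m₀ - 1)) q) := by
    have : T ^ m₀ = T ^ (1 : ℤ) * T ^ (m₀ - 1) := by
      rw [← zpow_add]; ring_nf
    rw [this, RelIso.mul_apply, zpow_one]
  rw [hdec]
  exact T.strictMono hlt

/-- The pattern condition at a point. -/
def PattCond (F : G → ℝ → ℝ) (pe : ℕ → G × G) (s : List Bool) (z : ℝ) : Prop :=
  ∀ i : ℕ, ∀ hi : i < s.length,
    (s.get ⟨i, hi⟩ = true → F (pe i).1 z ≤ F (pe i).2 z) ∧
    (s.get ⟨i, hi⟩ = false → F (pe i).2 z < F (pe i).1 z)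

/-- A pattern is realized on some rational interval, at all rational points. -/
def Patt (F : G → ℝ → ℝ) (pe : ℕ → G × G) (s : List Bool) : Prop :=
  ∃ a b : ℚ, a < b ∧ ∀ q : ℚ, (a : ℝ) < (q : ℝ) → (q : ℝ) < (b : ℝ) → PattCond F pe s (q : ℝ)

lemma le_on_of_rat {F1 F2 : ℝ → ℝ} (h1 : Continuous F1) (h2 : Continuous F2)
    {a b : ℝ} (h : ∀ q : ℚ, a < (q : ℝ) → (q : ℝ) < b → F1 q ≤ F2 q) :
    ∀ z ∈ Set.Ioo a b, F1 z ≤ F2 z := by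
  intro z hz
  have hdense : Set.Ioo a b ⊆ closure (Set.Ioo a b ∩ Set.range ((↑) : ℚ → ℝ)) :=
    Rat.denseRange_cast.open_subset_closure_inter isOpen_Ioo
  have hsub : Set.Ioo a b ∩ Set.range ((↑) : ℚ → ℝ) ⊆ {w : ℝ | F1 w ≤ F2 w} := by
    rintro w ⟨hw, ⟨q, rfl⟩⟩
    exact h q hw.1 hw.2
  have hcl : IsClosed {w : ℝ | F1 w ≤ F2 w} := isClosed_le h1 h2
  have := closure_mono hsub (hdense hz)
  rwa [hcl.closure_eq] at this
/-- Avoid finitely many closed sets without interior inside an interval. -/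
lemma exists_subinterval_avoiding (n : ℕ) (E : ℕ → Set ℝ) :
    ∀ u v : ℝ, u < v →
    (∀ i, i < n → IsClosed (E i) ∧
      (∀ x y : ℝ, x < y → Set.Ioo x y ⊆ Set.Ioo u v → ¬ Set.Ioo x y ⊆ E i)) →
    ∃ x y : ℝ, x < y ∧ Set.Ioo x y ⊆ Set.Ioo u v ∧ ∀ i, i < n → Disjoint (Set.Ioo x y) (E i) := by
  induction n with
  | zero =>
    intro u v huv _
    exact ⟨u, v, huv, subset_refl _, fun i hi => absurd hi (Nat.not_lt_zero i)⟩
  | succ n ih =>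
    intro u v huv hE
    obtain ⟨x, y, hxy, hsub, hdisj⟩ := ih u v huv (fun i hi => hE i (Nat.lt_succ_of_lt hi))
    have hW : IsOpen (Set.Ioo x y \ E n) := isOpen_Ioo.sdiff (hE n (Nat.lt_succ_self n)).1
    have hWne : (Set.Ioo x y \ E n).Nonempty := by
      rw [Set.nonempty_iff_ne_empty]
      intro hem
      rw [Set.diff_eq_empty] at hem
      exact (hE n (Nat.lt_succ_self n)).2 x y hxy hsub hem
    obtain ⟨w, hw⟩ := hWne
    obtain ⟨ε, hε, hball⟩ := Metric.isOpen_iff.mp hW w hw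
    refine ⟨w - ε/2, w + ε/2, by linarith, ?_, ?_⟩
    · have hss : Set.Ioo (w - ε/2) (w + ε/2) ⊆ Set.Ioo x y \ E n := by
        intro t ht
        apply hball
        rw [Real.ball_eq_Ioo]
        exact ⟨by cases ht; linarith, by cases ht; linarith⟩
      exact fun t ht => (hss ht).1 |> hsub
    · intro i hi
      rcases Nat.lt_succ_iff_lt_or_eq.mp hi with h | h
      · refine Set.disjoint_left.mpr fun t ht hti => ?_
        have hss : Set.Ioo (w - ε/2) (w + ε/2) ⊆ Set.Ioo x y := by
          intro t' ht'
          apply (hball ?_).1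
          rw [Real.ball_eq_Ioo]
          exact ⟨by cases ht'; linarith, by cases ht'; linarith⟩
        exact Set.disjoint_left.mp (hdisj i h) (hss ht) hti
      · subst h
        refine Set.disjoint_left.mpr fun t ht hti => ?_
        have : t ∈ Set.Ioo x y \ E i := by
          apply hball
          rw [Real.ball_eq_Ioo]
          exact ⟨by cases ht; linarith, by cases ht; linarith⟩
        exact this.2 hti

/-- A pattern transfers to a conjugated action. -/
lemma patt_conj_of {F : G → ℝ → ℝ} (hFc : ∀ g, Continuous (F g)) (f : ℝ ≃o ℝ)
    (pe : ℕ → G × G) (s : List Bool) (h : Patt F pe s) : Patt (conjFun f F) pe s := by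
  obtain ⟨a, b, hab, hcond⟩ := h
  have habR : (a : ℝ) < (b : ℝ) := by exact_mod_cast hab
  -- on the real interval : true indices give ≤ , false indices give ≥
  have htrue : ∀ i (hi : i < s.length), s.get ⟨i, hi⟩ = true →
      ∀ z ∈ Set.Ioo (a : ℝ) (b : ℝ), F (pe i).1 z ≤ F (pe i).2 z := by
    intro i hi hget
    exact le_on_of_rat (hFc _) (hFc _) fun q hq1 hq2 => ((hcond q hq1 hq2) i hi).1 hget
  have hfalse : ∀ i (hi : i < s.length), s.get ⟨i, hi⟩ = false →
      ∀ z ∈ Set.Ioo (a : ℝ) (b : ℝ), F (pe i).2 z ≤ F (pe i).1 z := by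
    intro i hi hget
    exact le_on_of_rat (hFc _) (hFc _) fun q hq1 hq2 => (((hcond q hq1 hq2) i hi).2 hget).le
  -- the equality sets of false indices have no interior in (a,b)
  set E : ℕ → Set ℝ := fun i => {z : ℝ | F (pe i).1 z = F (pe i).2 z} with hEdef
  have hEprop : ∀ i, ∀ hi : i < s.length, (s.get ⟨i, hi⟩ = false) →
      (∀ x y : ℝ, x < y → Set.Ioo x y ⊆ Set.Ioo (a:ℝ) (b:ℝ) → ¬ Set.Ioo x y ⊆ E i) := by
    intro i hi hget x y hxy hsubs hcont
    obtain ⟨q, hq1, hq2⟩ := exists_rat_btwn hxy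
    have hmem : (q : ℝ) ∈ Set.Ioo x y := ⟨hq1, hq2⟩
    have hio := hsubs hmem
    have := (hcond q hio.1 hio.2 i hi).2 hget
    have heq : F (pe i).1 (q:ℝ) = F (pe i).2 (q:ℝ) := hcont hmem
    exact absurd heq (ne_of_gt this)
  -- a subinterval avoiding all false equality sets
  classical
  set E' : ℕ → Set ℝ := fun i =>
    if h : i < s.length then (if s.get ⟨i, h⟩ = false then E i else ∅) else ∅ with hE'def
  have hE'cond : ∀ i, i < s.length → IsClosed (E' i) ∧
      (∀ x y : ℝ, x < y → Set.Ioo x y ⊆ Set.Ioo (a:ℝ) (b:ℝ) → ¬ Set.Ioo x y ⊆ E' i) := by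
    intro i hi
    rw [hE'def]
    simp only
    rw [dif_pos hi]
    by_cases hc : s.get ⟨i, hi⟩ = false
    · rw [if_pos hc]
      exact ⟨isClosed_eq (hFc _) (hFc _), hEprop i hi hc⟩
    · rw [if_neg hc]
      refine ⟨isClosed_empty, fun x y hxy _ hsub => ?_⟩
      obtain ⟨q, hq1, hq2⟩ := exists_rat_btwn hxy
      exact Set.notMem_empty _ (hsub ⟨hq1, hq2⟩)
  obtain ⟨x, y, hxy, hsubxy, hdisj⟩ :=
    exists_subinterval_avoiding s.length E' (a:ℝ) (b:ℝ) habR hE'cond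
  -- transport through f
  have hfxy : f x < f y := f.strictMono hxy
  obtain ⟨a', ha'1, ha'2⟩ := exists_rat_btwn hfxy
  obtain ⟨b', hb'1, hb'2⟩ := exists_rat_btwn ha'2
  have ha'b' : a' < b' := by exact_mod_cast hb'1
  refine ⟨a', b', ha'b', ?_⟩
  intro q hq1 hq2
  have hmem : f.symm (q : ℝ) ∈ Set.Ioo x y := by
    constructor
    · have h1 : f x < (q : ℝ) := lt_trans ha'1 hq1
      have := f.symm.strictMono h1
      rwa [f.symm_apply_apply] at this
    · have h1 : (q : ℝ) < f y := lt_trans hq2 hb'2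
      have := f.symm.strictMono h1
      rwa [f.symm_apply_apply] at this
  intro i hi
  constructor
  · intro hget
    show f (F (pe i).1 (f.symm (q:ℝ))) ≤ f (F (pe i).2 (f.symm (q:ℝ)))
    rw [f.le_iff_le]
    exact htrue i hi hget _ (hsubxy hmem)
  · intro hget
    show f (F (pe i).2 (f.symm (q:ℝ))) < f (F (pe i).1 (f.symm (q:ℝ)))
    rw [f.lt_iff_lt]
    have hle := hfalse i hi hget _ (hsubxy hmem)
    have hne : F (pe i).1 (f.symm (q:ℝ)) ≠ F (pe i).2 (f.symm (q:ℝ)) := by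
      intro heq
      have hmemE : f.symm (q:ℝ) ∈ E' i := by
        rw [hE'def]
        simp only
        rw [dif_pos hi, if_pos hget]
        exact heq
      exact Set.disjoint_left.mp (hdisj i hi) hmem hmemE
    exact lt_of_le_of_ne hle fun hcontra => hne hcontra.symm

lemma exists_good_point [Countable G] (φ : G →* (ℝ ≃o ℝ)) :
    ∃ y₀ : ℝ, ∀ p : G × G, y₀ ∉ frontier {z : ℝ | actMap φ p.1 z ≤ actMap φ p.2 z} := by
  have hC : ∀ p : G × G, IsClosed {z : ℝ | actMap φ p.1 z ≤ actMap φ p.2 z} := fun p =>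
    isClosed_le (act_continuous φ p.1) (act_continuous φ p.2)
  have hdense : Dense (⋂ p : G × G, (frontier {z : ℝ | actMap φ p.1 z ≤ actMap φ p.2 z})ᶜ) := by
    apply dense_iInter_of_isOpen
    · exact fun p => isClosed_frontier.isOpen_compl
    · intro p
      rw [← interior_eq_empty_iff_dense_compl]
      exact interior_frontier (hC p)
  obtain ⟨y₀, hy₀⟩ := hdense.nonempty
  exact ⟨y₀, fun p => (Set.mem_iInter.mp hy₀ p)⟩

/-- The pattern of `φ` at a good point is realized on a rational interval. -/
lemma patt_at_good [Countable G] {φ : G →* (ℝ ≃o ℝ)} (pe : ℕ → G × G) {y₀ : ℝ}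
    (hgood : ∀ p : G × G, y₀ ∉ frontier {z : ℝ | actMap φ p.1 z ≤ actMap φ p.2 z}) (n : ℕ) :
    Patt (actMap φ) pe
      (List.ofFn fun j : Fin n => decide (actMap φ (pe j).1 y₀ ≤ actMap φ (pe j).2 y₀)) := by
  classical
  -- neighborhoods where each condition holds with the right sign
  have hnbhd : ∀ i : ℕ, ∃ V : Set ℝ, IsOpen V ∧ y₀ ∈ V ∧
      ∀ z ∈ V, (actMap φ (pe i).1 y₀ ≤ actMap φ (pe i).2 y₀ → actMap φ (pe i).1 z ≤ actMap φ (pe i).2 z) ∧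
        (¬ actMap φ (pe i).1 y₀ ≤ actMap φ (pe i).2 y₀ → actMap φ (pe i).2 z < actMap φ (pe i).1 z) := by
    intro i
    set C := {z : ℝ | actMap φ (pe i).1 z ≤ actMap φ (pe i).2 z} with hCdef
    have hCc : IsClosed C := isClosed_le (act_continuous φ _) (act_continuous φ _)
    by_cases hy : y₀ ∈ C
    · have hint : y₀ ∈ interior C := by
        by_contra hni
        exact hgood (pe i) (by rw [hCc.frontier_eq]; exact ⟨hy, hni⟩)
      refine ⟨interior C, isOpen_interior, hint, fun z hz =>
        ⟨fun _ => (interior_subset : interior C ⊆ C) hz, fun hn => absurd hy hn⟩⟩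
    · refine ⟨Cᶜ, hCc.isOpen_compl, hy, fun z hz => ⟨fun hy' => absurd hy' hy, fun _ => not_le.mp hz⟩⟩
  choose V hVopen hVmem hVcond using hnbhd
  -- a common neighborhood for the first n conditions
  set W := ⋂ i ∈ Finset.range n, V i with hW
  have hWopen : IsOpen W := isOpen_biInter_finset fun i _ => hVopen i
  have hWmem : y₀ ∈ W := Set.mem_biInter fun i _ => hVmem i
  obtain ⟨ε, hε, hball⟩ := Metric.isOpen_iff.mp hWopen y₀ hWmem
  obtain ⟨a, ha1, ha2⟩ := exists_rat_btwn (by linarith : y₀ - ε < y₀)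
  obtain ⟨b, hb1, hb2⟩ := exists_rat_btwn (by linarith : y₀ < y₀ + ε)
  have hab : a < b := by
    have : (a : ℝ) < (b : ℝ) := lt_trans ha2 hb1
    exact_mod_cast this
  refine ⟨a, b, hab, ?_⟩
  intro q hq1 hq2 i hi
  rw [List.length_ofFn] at hi
  have hqW : (q : ℝ) ∈ W := by
    apply hball
    rw [Real.ball_eq_Ioo]
    constructor
    · linarith
    · linarith
  have hqV : (q : ℝ) ∈ V i := by
    have := Set.mem_iInter.mp hqW
    exact Set.mem_iInter.mp (this i) (Finset.mem_range.mpr hi)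
  constructor
  · intro hget
    rw [List.get_ofFn] at hget
    simp only [decide_eq_true_eq] at hget
    exact (hVcond i _ hqV).1 hget
  · intro hget
    rw [List.get_ofFn] at hget
    simp only [decide_eq_false_iff_not] at hget
    exact (hVcond i _ hqV).2 hget

/-- In the non-crossing case, exact matching at a single point exists. -/
lemma match_nocross {φ φ' : G →* (ℝ ≃o ℝ)} (pe : ℕ → G × G) (hpe : Function.Surjective pe)
    (y₀ : ℝ)
    (hNC : ∀ g h : G, interior {z : ℝ | actMap φ' g z ≤ actMap φ' h z} = ∅ ∨
      {z : ℝ | actMap φ' g z ≤ actMap φ' h z} = Set.univ)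
    (hpatt : ∀ n : ℕ, Patt (actMap φ') pe
      (List.ofFn fun j : Fin n => decide (actMap φ (pe j).1 y₀ ≤ actMap φ (pe j).2 y₀))) :
    ∃ y' : ℝ, ∀ g h : G, (actMap φ g y₀ ≤ actMap φ h y₀ ↔ actMap φ' g y' ≤ actMap φ' h y') := by
  classical
  set C : ℕ → Set ℝ := fun i => {z : ℝ | actMap φ' (pe i).1 z ≤ actMap φ' (pe i).2 z} with hCdef
  have hkey : ∀ i : ℕ,
      (actMap φ (pe i).1 y₀ ≤ actMap φ (pe i).2 y₀ → C i = Set.univ) ∧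
      (¬ actMap φ (pe i).1 y₀ ≤ actMap φ (pe i).2 y₀ → interior (C i) = ∅) := by
    intro i
    obtain ⟨a, b, hab, hcond⟩ := hpatt (i + 1)
    have habR : (a : ℝ) < b := by exact_mod_cast hab
    have hlen : i < (List.ofFn fun j : Fin (i+1) =>
        decide (actMap φ (pe j).1 y₀ ≤ actMap φ (pe j).2 y₀)).length := by
      rw [List.length_ofFn]; exact Nat.lt_succ_self i
    constructor
    · intro htrue
      have hle : ∀ z ∈ Set.Ioo (a : ℝ) (b : ℝ), actMap φ' (pe i).1 z ≤ actMap φ' (pe i).2 z := by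
        apply le_on_of_rat (act_continuous φ' _) (act_continuous φ' _)
        intro q hq1 hq2
        refine ((hcond q hq1 hq2) i hlen).1 ?_
        rw [List.get_ofFn]
        simp only [decide_eq_true_eq]
        exact htrue
      rcases hNC (pe i).1 (pe i).2 with h | h
      · exfalso
        have hne : (Set.Ioo (a:ℝ) (b:ℝ)).Nonempty := Set.nonempty_Ioo.mpr habR
        obtain ⟨z, hz⟩ := hne
        have : z ∈ interior (C i) :=
          mem_interior.mpr ⟨Set.Ioo (a:ℝ) b, fun w hw => hle w hw, isOpen_Ioo, hz⟩
        rw [h] at this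
        exact this
      · exact h
    · intro hfalse
      obtain ⟨q, hq1, hq2⟩ := exists_rat_btwn habR
      have := ((hcond q hq1 hq2) i hlen).2 (by
        rw [List.get_ofFn]
        simp only [decide_eq_false_iff_not]
        exact hfalse)
      rcases hNC (pe i).1 (pe i).2 with h | h
      · exact h
      · exact absurd (Set.eq_univ_iff_forall.mp h (q : ℝ)) (not_le.mpr this)
  set D : ℕ → Set ℝ := fun i =>
    if actMap φ (pe i).1 y₀ ≤ actMap φ (pe i).2 y₀ then Set.univ else (C i)ᶜ with hDdef
  have hDopen : ∀ i, IsOpen (D i) := by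
    intro i
    rw [hDdef]
    simp only
    by_cases hc : actMap φ (pe i).1 y₀ ≤ actMap φ (pe i).2 y₀
    · rw [if_pos hc]; exact isOpen_univ
    · rw [if_neg hc]
      exact (isClosed_le (act_continuous φ' _) (act_continuous φ' _)).isOpen_compl
  have hDdense : ∀ i, Dense (D i) := by
    intro i
    rw [hDdef]
    simp only
    by_cases hc : actMap φ (pe i).1 y₀ ≤ actMap φ (pe i).2 y₀
    · rw [if_pos hc]; exact dense_univ
    · rw [if_neg hc]
      rw [← interior_eq_empty_iff_dense_compl]
      exact (hkey i).2 hc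
  have hdense := dense_iInter_of_isOpen hDopen hDdense
  obtain ⟨y', hy'⟩ := hdense.nonempty
  refine ⟨y', fun g h => ?_⟩
  obtain ⟨i, hi⟩ := hpe (g, h)
  have hg1 : (pe i).1 = g := by rw [hi]
  have hg2 : (pe i).2 = h := by rw [hi]
  subst hg1; subst hg2
  by_cases hc : actMap φ (pe i).1 y₀ ≤ actMap φ (pe i).2 y₀
  · have hCuniv := (hkey i).1 hc
    constructor
    · intro _
      have : y' ∈ C i := hCuniv ▸ Set.mem_univ _
      exact this
    · intro _; exact hc
  · have hyD := Set.mem_iInter.mp hy' i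
    rw [hDdef] at hyD
    simp only at hyD
    rw [if_neg hc] at hyD
    constructor
    · intro h'; exact absurd h' hc
    · intro h'; exact absurd h' hyD

lemma pow_comm_point {φ' : G →* (ℝ ≃o ℝ)} {T : ℝ ≃o ℝ}
    (hTcomm : ∀ g x, T (actMap φ' g x) = actMap φ' g (T x)) (g : G) (m : ℤ) (x : ℝ) :
    actMap φ' g ((T ^ m) x) = (T ^ m) (actMap φ' g x) := by
  have hcomm : Commute (φ' g) T := by
    apply DFunLike.ext
    intro z
    rw [RelIso.mul_apply, RelIso.mul_apply]
    exact (hTcomm g z).symm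
  have := (hcomm.zpow_right m)
  have happ := DFunLike.congr_fun this x
  rw [RelIso.mul_apply, RelIso.mul_apply] at happ
  exact happ

/-- In the crossing case, matching along a bounded sequence exists. -/
lemma match_cross {φ φ' : G →* (ℝ ≃o ℝ)} (pe : ℕ → G × G) (hpe : Function.Surjective pe)
    (y₀ : ℝ) (T : ℝ ≃o ℝ)
    (hTcomm : ∀ g x, T (actMap φ' g x) = actMap φ' g (T x)) (hTfix : ∀ x, x < T x)
    (hpatt : ∀ n : ℕ, Patt (actMap φ') pe
      (List.ofFn fun j : Fin n => decide (actMap φ (pe j).1 y₀ ≤ actMap φ (pe j).2 y₀))) :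
    ∃ (y' : ℝ) (t : ℕ → ℝ), Tendsto t atTop (𝓝 y') ∧ ∀ g h : G, ∀ᶠ n in atTop,
      (actMap φ g y₀ ≤ actMap φ h y₀ ↔ actMap φ' g (t n) ≤ actMap φ' h (t n)) := by
  classical
  have hqex : ∀ n : ℕ, ∃ q : ℝ, PattCond (actMap φ') pe
      (List.ofFn fun j : Fin n => decide (actMap φ (pe j).1 y₀ ≤ actMap φ (pe j).2 y₀)) q := by
    intro n
    obtain ⟨a, b, hab, hcond⟩ := hpatt n
    obtain ⟨qq, h1, h2⟩ := exists_rat_btwn (show (a : ℝ) < b by exact_mod_cast hab)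
    exact ⟨(qq : ℝ), hcond qq h1 h2⟩
  choose q hq using hqex
  have hfold : ∀ n, ∃ m : ℤ, (0 : ℝ) ≤ (T ^ m) (q n) ∧ (T ^ m) (q n) < T 0 :=
    fun n => fold_exists hTfix 0 (q n)
  choose mm hm1 hm2 using hfold
  set t0 : ℕ → ℝ := fun n => (T ^ mm n) (q n) with ht0
  have ht0cond : ∀ n, PattCond (actMap φ')  pe
      (List.ofFn fun j : Fin n => decide (actMap φ (pe j).1 y₀ ≤ actMap φ (pe j).2 y₀)) (t0 n) := by
    intro n i hi
    constructor
    · intro hget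
      have h1 := ((hq n) i hi).1 hget
      show actMap φ' (pe i).1 ((T ^ mm n) (q n)) ≤ actMap φ' (pe i).2 ((T ^ mm n) (q n))
      rw [pow_comm_point hTcomm, pow_comm_point hTcomm]
      exact (T ^ mm n).le_iff_le.mpr h1
    · intro hget
      have h1 := ((hq n) i hi).2 hget
      show actMap φ' (pe i).2 ((T ^ mm n) (q n)) < actMap φ' (pe i).1 ((T ^ mm n) (q n))
      rw [pow_comm_point hTcomm, pow_comm_point hTcomm]
      exact (T ^ mm n).lt_iff_lt.mpr h1
  obtain ⟨y', _, σ, hσmono, hσtend⟩ := tendsto_subseq_of_bounded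
    (Metric.isBounded_Icc (0 : ℝ) (T 0)) (fun n => Set.mem_Icc.mpr ⟨hm1 n, (hm2 n).le⟩ : ∀ n, t0 n ∈ Set.Icc (0:ℝ) (T 0))
  refine ⟨y', t0 ∘ σ, hσtend, ?_⟩
  intro g h
  obtain ⟨i, hi⟩ := hpe (g, h)
  have hg1 : (pe i).1 = g := by rw [hi]
  have hg2 : (pe i).2 = h := by rw [hi]
  subst hg1; subst hg2
  rw [eventually_atTop]
  refine ⟨i + 1, fun k hk => ?_⟩
  have hik : i < σ k := lt_of_lt_of_le (Nat.lt_of_lt_of_le (Nat.lt_succ_self i) hk) (hσmono.le_apply)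
  have hlen : i < (List.ofFn fun j : Fin (σ k) =>
      decide (actMap φ (pe j).1 y₀ ≤ actMap φ (pe j).2 y₀)).length := by
    rw [List.length_ofFn]; exact hik
  have hcondi := ht0cond (σ k) i hlen
  by_cases hc : actMap φ (pe i).1 y₀ ≤ actMap φ (pe i).2 y₀
  · constructor
    · intro _
      exact hcondi.1 (by rw [List.get_ofFn]; simp only [decide_eq_true_eq]; exact hc)
    · intro _; exact hc
  · constructor
    · intro h'; exact absurd h' hc
    · intro h'
      have := hcondi.2 (by rw [List.get_ofFn]; simp only [decide_eq_false_iff_not]; exact hc)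
      exact absurd h' (not_le.mpr this)

lemma conjFun_symm_conj (f : ℝ ≃o ℝ) (F : G → ℝ → ℝ) : conjFun f.symm (conjFun f F) = F := by
  funext g x
  simp only [conjFun, OrderIso.symm_symm, f.symm_apply_apply, f.apply_symm_apply]

/-- Equality of realizable patterns implies conjugacy (under no-proximality). -/
lemma conj_of_patterns [Countable G] {φ φ' : G →* (ℝ ≃o ℝ)}
    (hmin : IsMinimalAction φ) (hmin' : IsMinimalAction φ')
    (hnp' : ¬ IsProximalAction φ')
    (pe : ℕ → G × G) (hpe : Function.Surjective pe)
    (hpatts : ∀ s : List Bool, Patt (actMap φ) pe s → Patt (actMap φ') pe s) :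
    ∃ f : ℝ ≃o ℝ, conjFun f (actMap φ) = actMap φ' := by
  obtain ⟨y₀, hgood⟩ := exists_good_point φ
  have hpatt' : ∀ n : ℕ, Patt (actMap φ') pe
      (List.ofFn fun j : Fin n => decide (actMap φ (pe j).1 y₀ ≤ actMap φ (pe j).2 y₀)) :=
    fun n => hpatts _ (patt_at_good pe hgood n)
  by_cases hcross : ∃ g h : G, (interior {z : ℝ | actMap φ' g z ≤ actMap φ' h z}).Nonempty ∧
      {z : ℝ | actMap φ' g z ≤ actMap φ' h z} ≠ Set.univ
  · obtain ⟨g, h, ⟨w, hw⟩, hne⟩ := hcross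
    have h1 : ∃ z : ℝ, actMap φ' (h⁻¹ * g) z ≤ z := by
      refine ⟨w, ?_⟩
      have hle : actMap φ' g w ≤ actMap φ' h w :=
        (interior_subset : interior {z : ℝ | actMap φ' g z ≤ actMap φ' h z} ⊆ _) hw
      exact (act_le_diff φ' g h w).mp hle
    have h2 : ∃ z : ℝ, z < actMap φ' (h⁻¹ * g) z := by
      obtain ⟨z, hz⟩ := (Set.ne_univ_iff_exists_notMem _).mp hne
      exact ⟨z, not_le.mp fun hcon => hz ((act_le_diff φ' g h z).mpr hcon)⟩
    obtain ⟨T, hTcomm, hTfix⟩ := exists_commuting_translation hmin' hnp' h1 h2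
    obtain ⟨y', t, ht, hmatch⟩ := match_cross pe hpe y₀ T hTcomm hTfix hpatt'
    exact conj_of_matching hmin hmin' y₀ y' t ht hmatch
  · push_neg at hcross
    have hNC : ∀ g h : G, interior {z : ℝ | actMap φ' g z ≤ actMap φ' h z} = ∅ ∨
        {z : ℝ | actMap φ' g z ≤ actMap φ' h z} = Set.univ := by
      intro g h
      by_cases hi : (interior {z : ℝ | actMap φ' g z ≤ actMap φ' h z}).Nonempty
      · right
        exact hcross g h hi
      · left
        exact Set.not_nonempty_iff_eq_empty.mp hi
    obtain ⟨y', hmatch⟩ := match_nocross pe hpe y₀ hNC hpatt'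
    exact conj_of_matching hmin hmin' y₀ y' (fun _ => y') tendsto_const_nhds
      (fun g h => Filter.Eventually.of_forall fun _ => hmatch g h)

/-- The pattern sets are measurable. -/
lemma patt_measurableSet (pe : ℕ → G × G) (s : List Bool) :
    MeasurableSet {F : RepMin G | Patt (F : G → ℝ → ℝ) pe s} := by
  classical
  have hev : ∀ (g : G) (z : ℝ), Measurable fun F : RepMin G => (F : G → ℝ → ℝ) g z := by
    intro g z
    exact (measurable_pi_apply z).comp ((measurable_pi_apply g).comp measurable_subtype_coe)
  have hPC : ∀ z : ℝ, MeasurableSet {F : RepMin G | PattCond (F : G → ℝ → ℝ) pe s z} := by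
    intro z
    have heq : {F : RepMin G | PattCond (F : G → ℝ → ℝ) pe s z} =
        ⋂ (i : ℕ) (hi : i < s.length),
          ({F : RepMin G | s.get ⟨i, hi⟩ = true →
              (F : G → ℝ → ℝ) (pe i).1 z ≤ (F : G → ℝ → ℝ) (pe i).2 z} ∩
           {F : RepMin G | s.get ⟨i, hi⟩ = false →
              (F : G → ℝ → ℝ) (pe i).2 z < (F : G → ℝ → ℝ) (pe i).1 z}) := by
      ext F
      simp only [Set.mem_setOf_eq, Set.mem_iInter, Set.mem_inter_iff, PattCond]
    rw [heq]
    refine MeasurableSet.iInter fun i => MeasurableSet.iInter fun hi =>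
      MeasurableSet.inter ?_ ?_
    · by_cases hb : s.get ⟨i, hi⟩ = true
      · have hs : {F : RepMin G | s.get ⟨i, hi⟩ = true →
            (F : G → ℝ → ℝ) (pe i).1 z ≤ (F : G → ℝ → ℝ) (pe i).2 z} =
            {F : RepMin G | (F : G → ℝ → ℝ) (pe i).1 z ≤ (F : G → ℝ → ℝ) (pe i).2 z} := by
          simp only [List.get_eq_getElem] at hb
          ext F; simp [hb]
        rw [hs]
        exact measurableSet_le (hev _ _) (hev _ _)
      · have hs : {F : RepMin G | s.get ⟨i, hi⟩ = true →
            (F : G → ℝ → ℝ) (pe i).1 z ≤ (F : G → ℝ → ℝ) (pe i).2 z} = Set.univ := by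
          simp only [List.get_eq_getElem] at hb
          ext F; simp [hb]
        rw [hs]
        exact MeasurableSet.univ
    · by_cases hb : s.get ⟨i, hi⟩ = false
      · have hs : {F : RepMin G | s.get ⟨i, hi⟩ = false →
            (F : G → ℝ → ℝ) (pe i).2 z < (F : G → ℝ → ℝ) (pe i).1 z} =
            {F : RepMin G | (F : G → ℝ → ℝ) (pe i).2 z < (F : G → ℝ → ℝ) (pe i).1 z} := by
          simp only [List.get_eq_getElem] at hb
          ext F; simp [hb]
        rw [hs]
        exact measurableSet_lt (hev _ _) (hev _ _)
      · have hs : {F : RepMin G | s.get ⟨i, hi⟩ = false →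
            (F : G → ℝ → ℝ) (pe i).2 z < (F : G → ℝ → ℝ) (pe i).1 z} = Set.univ := by
          simp only [List.get_eq_getElem] at hb
          ext F; simp [hb]
        rw [hs]
        exact MeasurableSet.univ
  have hPatt_eq : {F : RepMin G | Patt (F : G → ℝ → ℝ) pe s} =
      ⋃ (a : ℚ) (b : ℚ) (_ : a < b), ⋂ (q : ℚ) (_ : (a : ℝ) < (q : ℝ)) (_ : (q : ℝ) < (b : ℝ)),
        {F : RepMin G | PattCond (F : G → ℝ → ℝ) pe s (q : ℝ)} := by
    ext F
    simp only [Set.mem_setOf_eq, Set.mem_iUnion, Set.mem_iInter, Patt]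
    constructor
    · rintro ⟨a, b, hab, hc⟩; exact ⟨a, b, hab, hc⟩
    · rintro ⟨a, b, hab, hc⟩; exact ⟨a, b, hab, hc⟩
  rw [hPatt_eq]
  refine MeasurableSet.iUnion fun a => MeasurableSet.iUnion fun b =>
    MeasurableSet.iUnion fun _ => MeasurableSet.iInter fun q =>
    MeasurableSet.iInter fun _ => MeasurableSet.iInter fun _ => hPC (q : ℝ)

end Stmt3Aux

open Stmt3Aux

theorem stmt3 (G : Type*) [Group G] [Countable G]
    (h : ∀ φ : G →* (ℝ ≃o ℝ), IsMinimalAction φ → ¬ IsProximalAction φ) :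
    ClassC G := by
  classical
  haveI : Nonempty (G × G) := ⟨(1, 1)⟩
  haveI : Nonempty (List Bool) := ⟨[]⟩
  obtain ⟨pe, hpe⟩ := exists_surjective_nat (G × G)
  obtain ⟨se, hse⟩ := exists_surjective_nat (List Bool)
  obtain ⟨ι, hι⟩ := MeasureTheory.exists_measurableEmbedding_real (ℕ → Bool)
  set Φ : RepMin G → (ℕ → Bool) := fun F => fun n =>
    decide (Patt (F : G → ℝ → ℝ) pe (se n)) with hΦdef
  refine ⟨ι ∘ Φ, ?_, ?_⟩
  · refine hι.measurable.comp ?_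
    refine measurable_pi_lambda _ fun n => ?_
    refine measurable_to_countable' fun y => ?_
    rcases y with _ | _
    · -- false
      have : (fun F : RepMin G => decide (Patt (F : G → ℝ → ℝ) pe (se n))) ⁻¹' {false} =
          {F : RepMin G | Patt (F : G → ℝ → ℝ) pe (se n)}ᶜ := by
        ext F
        simp [Set.mem_preimage]
      rw [this]
      exact (patt_measurableSet pe (se n)).compl
    · have : (fun F : RepMin G => decide (Patt (F : G → ℝ → ℝ) pe (se n))) ⁻¹' {true} =
          {F : RepMin G | Patt (F : G → ℝ → ℝ) pe (se n)} := by
        ext F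
        simp [Set.mem_preimage]
      rw [this]
      exact patt_measurableSet pe (se n)
  · intro F F'
    obtain ⟨φ, hφmin, hφeq⟩ := F.2
    obtain ⟨φ', hφ'min, hφ'eq⟩ := F'.2
    constructor
    · intro hr
      have hΦeq : Φ F = Φ F' := hι.injective hr
      have hpatts : ∀ s : List Bool,
          Patt (F : G → ℝ → ℝ) pe s ↔ Patt (F' : G → ℝ → ℝ) pe s := by
        intro s
        obtain ⟨n, rfl⟩ := hse s
        have := congrFun hΦeq n
        rw [hΦdef] at this
        simp only [decide_eq_decide] at this
        exact this
      have hmap : ∀ s : List Bool, Patt (actMap φ) pe s → Patt (actMap φ') pe s := by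
        intro s hs
        have h1 : Patt (F : G → ℝ → ℝ) pe s := by rw [hφeq]; exact hs
        have h2 := (hpatts s).mp h1
        rwa [hφ'eq] at h2
      have hmain := conj_of_patterns hφmin hφ'min (h φ' hφ'min) pe hpe hmap
      rw [hφeq, hφ'eq]
      exact hmain
    · rintro ⟨f, hf⟩
      have hpatts : ∀ s : List Bool,
          Patt (F : G → ℝ → ℝ) pe s ↔ Patt (F' : G → ℝ → ℝ) pe s := by
        intro s
        constructor
        · intro hs
          have hcont : ∀ g : G, Continuous ((F : G → ℝ → ℝ) g) := by
            intro g; rw [hφeq]; exact act_continuous φ g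
          have := patt_conj_of hcont f pe s hs
          rwa [hf] at this
        · intro hs
          have hcont : ∀ g : G, Continuous ((F' : G → ℝ → ℝ) g) := by
            intro g; rw [hφ'eq]; exact act_continuous φ' g
          have := patt_conj_of hcont f.symm pe s hs
          rwa [← hf, conjFun_symm_conj] at this
      have hΦeq : Φ F = Φ F' := by
        funext n
        rw [hΦdef]
        simp only
        exact decide_eq_decide.mpr (hpatts (se n))
      show ι (Φ F) = ι (Φ F')
      rw [hΦeq]
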